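/- Let n, s, r, δ, a be integers with n = 2s - 2r - δ, 0 ≤ a ≤ s - 3r - δ, r ≥ 1, δ ≥ 0, and s - 2r - δ ≥ 1 with s - 2r - δ ≤ n/2. Then C(n, s-3r-δ-a) + C(n, 2s-2r-δ-a) ≤ C(n, s). -/
import Mathlib

lemma mono_choose (n : ℕ) : ∀ i j : ℕ, i ≤ j → 2 * j ≤ n → n.choose i ≤ n.choose j := by
  intro i j hij hj
  induction j with
  | zero => simp [Nat.le_zero.mp hij]
  | succ j ih =>
    rcases Nat.lt_or_ge i (j+1) with h | h
    · calc n.choose i ≤ n.choose j := ih (Nat.lt_succ_iff.mp h) (by omega)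
        _ ≤ n.choose (j+1) := Nat.choose_le_succ_of_lt_half_left (by omega)
    · have : i = j + 1 := le_antisymm hij h
      simp [this]

lemma aux0 (n b : ℕ) (h : 2 * (b + 1) ≤ n) : 1 + n.choose b ≤ n.choose (b + 1) := by
  have hb1 : b + 1 ≤ n.choose b := by
    calc b + 1 = (b+1).choose b := (Nat.choose_succ_self_right b).symm
      _ ≤ n.choose b := Nat.choose_mono b (by omega)
  have key : n.choose (b+1) * (b+1) = n.choose b * (n - b) := Nat.choose_succ_right_eq n b
  have h2 : (1 + n.choose b) * (b + 1) ≤ n.choose (b+1) * (b+1) := by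
    rw [key]
    have : n - b ≥ b + 2 := by omega
    calc (1 + n.choose b) * (b+1) = (b+1) + n.choose b * (b+1) := by ring
      _ ≤ n.choose b + n.choose b * (b+1) := by gcongr
      _ = n.choose b * (b+2) := by ring
      _ ≤ n.choose b * (n - b) := by gcongr
  exact Nat.le_of_mul_le_mul_right h2 (by omega)

lemma key_ineq : ∀ n a b : ℕ, 2 * (a + b + 1) ≤ n →
    n.choose a + n.choose b ≤ n.choose (a + b + 1) := by
  intro n
  induction n with
  | zero => intro a b h; omega
  | succ m ih =>
    intro a b h
    match a, b with
    | 0, b => simpa using aux0 (m+1) b (by omega)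
    | a+1, 0 =>
      have := aux0 (m+1) (a+1) (by omega)
      simp only [Nat.choose_zero_right, Nat.add_zero]
      omega
    | a+1, b+1 =>
      have pa : (m+1).choose (a+1) = m.choose a + m.choose (a+1) := Nat.choose_succ_succ m a
      have pb : (m+1).choose (b+1) = m.choose b + m.choose (b+1) := Nat.choose_succ_succ m b
      have pt : (m+1).choose (a+1+(b+1)+1) = m.choose (a+b+2) + m.choose (a+b+3) := by
        have : a+1+(b+1)+1 = (a+b+2)+1 := by ring
        rw [this]; exact Nat.choose_succ_succ m (a+b+2)
      rcases Nat.lt_or_ge m (2*(a+b+3)) with hc | hc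
      · -- boundary: m + 1 = 2*(a+b+3)
        have hm : m = 2*(a+b+3) - 1 := by omega
        have hsymm : m.choose (a+b+3) = m.choose (a+b+2) := by
          have : a+b+2 = m - (a+b+3) := by omega
          rw [this, Nat.choose_symm (by omega)]
        have h1 : m.choose (a+1) + m.choose b ≤ m.choose (a+b+2) := by
          have := ih (a+1) b (by omega)
          simpa [show a+1+b+1 = a+b+2 by ring] using this
        have h2 : m.choose a + m.choose (b+1) ≤ m.choose (a+b+2) := by
          have := ih a (b+1) (by omega)
          simpa [show a+(b+1)+1 = a+b+2 by ring] using this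
        rw [pa, pb, pt, hsymm]; omega
      · have h1 : m.choose (a+1) + m.choose (b+1) ≤ m.choose (a+b+3) := by
          have := ih (a+1) (b+1) (by omega)
          simpa [show a+1+(b+1)+1 = a+b+3 by ring] using this
        have h2 : m.choose a + m.choose b ≤ m.choose (a+b+2) := by
          have h2' := ih a b (by omega)
          calc m.choose a + m.choose b ≤ m.choose (a+b+1) := h2'
            _ ≤ m.choose (a+b+2) := mono_choose m _ _ (by omega) (by omega)
        rw [pa, pb, pt]; omega

theorem stmt13 (n s r δ a : ℕ) (hr : 1 ≤ r)
    (hn : n + 2 * r + δ = 2 * s) (ha : a + 3 * r + δ ≤ s)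
    (hk1 : 2 * r + δ + 1 ≤ s) (hk2 : 2 * (s - 2 * r - δ) ≤ n) :
    n.choose (s - 3 * r - δ - a) + n.choose (2 * s - 2 * r - δ - a) ≤ n.choose s := by
  set b := s - 3 * r - δ - a with hb
  have hsn : s ≤ n := by omega
  have h2 : 2 * s - 2 * r - δ - a = n - a := by omega
  have h3 : n.choose (n - a) = n.choose a := Nat.choose_symm (by omega)
  have h4 : n.choose s = n.choose (n - s) := (Nat.choose_symm hsn).symm
  rw [h2, h3, h4]
  have hba : b + a + 1 ≤ n - s := by omega
  calc n.choose b + n.choose a ≤ n.choose (b + a + 1) := key_ineq n b a (by omega)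
    _ ≤ n.choose (n - s) := mono_choose n _ _ hba (by omega)
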